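/- For any u, v > 0 and λ ∈ [1/4, 1] satisfying u ≤ w/2 where w := λu + (1-λ)v, one has λ·u·log(u) + (1-λ)·v·log(v) ≥ w·log(w) + w/32. -/

import Mathlib

theorem stmt_0 (u v lam : ℝ) (hu : 0 < u) (hv : 0 < v)
    (hlam : lam ∈ Set.Icc (1/4 : ℝ) 1)
    (hw : u ≤ (lam * u + (1 - lam) * v) / 2) :
    lam * (u * Real.log u) + (1 - lam) * (v * Real.log v) ≥
      (lam * u + (1 - lam) * v) * Real.log (lam * u + (1 - lam) * v) +
        (lam * u + (1 - lam) * v) / 32 := by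
  obtain ⟨hl1, hl2⟩ := hlam
  set w : ℝ := lam * u + (1 - lam) * v with hwdef
  have hwpos : 0 < w := lt_of_lt_of_le (by linarith) (by linarith : 2 * u ≤ w)
  -- v-bracket nonneg: log(w/v) ≤ w/v - 1
  have h1 : Real.log (w / v) ≤ w / v - 1 := Real.log_le_sub_one_of_pos (by positivity)
  have h1' : Real.log (w / v) = Real.log w - Real.log v := Real.log_div (ne_of_gt hwpos) (ne_of_gt hv)
  have hv' : 0 ≤ v * (Real.log v - Real.log w) + (w - v) := by
    have := mul_le_mul_of_nonneg_left h1 hv.le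
    rw [h1'] at this
    have hwv : v * (w / v) = w := by field_simp
    nlinarith [this]
  -- u-bracket: log(w/(2u)) ≤ w/(2u) - 1
  have h2 : Real.log (w / (2 * u)) ≤ w / (2 * u) - 1 := Real.log_le_sub_one_of_pos (by positivity)
  have h2' : Real.log (w / (2 * u)) = Real.log w - (Real.log 2 + Real.log u) := by
    rw [Real.log_div (ne_of_gt hwpos) (by positivity), Real.log_mul (by norm_num) (ne_of_gt hu)]
  have hu' : w / 2 - u * Real.log 2 ≤ u * (Real.log u - Real.log w) + (w - u) := by
    have := mul_le_mul_of_nonneg_left h2 hu.le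
    rw [h2'] at this
    have huw : u * (w / (2 * u)) = w / 2 := by field_simp
    nlinarith [this]
  have hlog2 : Real.log 2 ≤ 3 / 4 := by
    have := Real.log_two_lt_d9
    linarith
  have hlog2' : 0 ≤ Real.log 2 := Real.log_nonneg (by norm_num)
  -- u log 2 ≤ (w/2) * (3/4)
  have hub : u * Real.log 2 ≤ (w / 2) * (3 / 4) := by
    have : u * Real.log 2 ≤ (w / 2) * Real.log 2 :=
      mul_le_mul_of_nonneg_right (by linarith) hlog2'
    nlinarith
  have hbu : w / 8 ≤ u * (Real.log u - Real.log w) + (w - u) := by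
    nlinarith
  -- combine: gap = lam * bracket_u + (1-lam) * bracket_v
  have hkey : lam * (u * Real.log u) + (1 - lam) * (v * Real.log v)
      - w * Real.log w
      = lam * (u * (Real.log u - Real.log w) + (w - u))
        + (1 - lam) * (v * (Real.log v - Real.log w) + (w - v)) := by
    rw [hwdef]; ring
  nlinarith [mul_le_mul_of_nonneg_left hbu (by linarith : (0:ℝ) ≤ lam),
    mul_le_mul_of_nonneg_left hv' (by linarith : (0:ℝ) ≤ 1 - lam),
    mul_le_mul_of_nonneg_right hl1 (by linarith : (0:ℝ) ≤ w / 8)]
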